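/- Let S = ℂ[x₁,…,xₙ] with W = the hyperoctahedral group acting by permutations and sign changes of the variables (the Weyl group of type Cₙ), and let W₀ be the stabilizer of the functional −x₁. Then S^{W₀} = S^W[x₁] and S^{W₀} is a free S^W-module with basis 1, x₁, …, x₁^{2n−1}. -/

import Mathlib

open MvPolynomial

/-- The substitution `xᵢ ↦ εᵢ · x_{σ(i)}` determined by a signed permutation `(σ, ε)`. -/
noncomputable def signedSub {n : ℕ} (p : Equiv.Perm (Fin n) × (Fin n → ℂ)) :
    Fin n → MvPolynomial (Fin n) ℂ :=
  fun i => C (p.2 i) * X (p.1 i)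

/-- The subalgebra of polynomials invariant under a set `G` of signed permutations of the
variables, acting by `xᵢ ↦ εᵢ · x_{σ(i)}`. -/
noncomputable def signedInvariants {n : ℕ} (G : Set (Equiv.Perm (Fin n) × (Fin n → ℂ))) :
    Subalgebra ℂ (MvPolynomial (Fin n) ℂ) where
  carrier := {f | ∀ p ∈ G, aeval (signedSub p) f = f}
  mul_mem' := fun ha hb p hp => by rw [map_mul, ha p hp, hb p hp]
  add_mem' := fun ha hb p hp => by rw [map_add, ha p hp, hb p hp]
  algebraMap_mem' := fun c p hp => by
    rw [MvPolynomial.algebraMap_eq, aeval_C, MvPolynomial.algebraMap_eq]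

section Helpers

variable {m : ℕ}

lemma aeval_expand_two (f : Fin m → MvPolynomial (Fin m) ℂ) (g : MvPolynomial (Fin m) ℂ) :
    aeval f (expand 2 g) = aeval (fun i => f i ^ 2) g := by
  have : (aeval f).comp (expand 2 : MvPolynomial (Fin m) ℂ →ₐ[ℂ] MvPolynomial (Fin m) ℂ) = aeval (fun i : Fin m => f i ^ 2) := by
    apply MvPolynomial.algHom_ext
    intro i
    simp
  exact AlgHom.congr_fun this g

/-- `αₖ`: the k-th elementary symmetric polynomial in the squares of the variables. -/
noncomputable def Alpha (m k : ℕ) : MvPolynomial (Fin m) ℂ :=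
  expand 2 (esymm (Fin m) ℂ k)

lemma mem_signedInvariants_iff {G : Set (Equiv.Perm (Fin m) × (Fin m → ℂ))}
    {f : MvPolynomial (Fin m) ℂ} :
    f ∈ signedInvariants G ↔ ∀ p ∈ G, aeval (signedSub p) f = f := Iff.rfl

lemma alpha_invariant (k : ℕ) (p : Equiv.Perm (Fin m) × (Fin m → ℂ))
    (hs : ∀ i, p.2 i = 1 ∨ p.2 i = -1) :
    aeval (signedSub p) (Alpha m k) = Alpha m k := by
  rw [Alpha, aeval_expand_two]
  have h1 : (fun i => signedSub p i ^ 2) = (fun i => (X i : MvPolynomial (Fin m) ℂ) ^ 2) ∘ p.1 := by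
    funext i
    have : (p.2 i) ^ 2 = 1 := by rcases hs i with h | h <;> rw [h] <;> ring
    simp [signedSub, mul_pow, ← C_pow, this]
  rw [h1, ← aeval_rename, esymm_isSymmetric (Fin m) ℂ k p.1]
  rfl

lemma alpha_mem (k : ℕ) :
    Alpha m k ∈ signedInvariants {p : Equiv.Perm (Fin m) × (Fin m → ℂ) |
      ∀ i, p.2 i = 1 ∨ p.2 i = -1} :=
  fun p hp => alpha_invariant k p hp

end Helpers

section Helpers2
variable {m : ℕ}

lemma aeval_scale_monomial (u : Fin m → ℂ) (t : Fin m →₀ ℕ) (a : ℂ) :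
    aeval (fun i => C (u i) * X i) (monomial t a) =
      monomial t (a * ∏ i ∈ t.support, u i ^ t i) := by
  rw [aeval_monomial, monomial_eq]
  rw [Finsupp.prod, Finsupp.prod]
  simp only [mul_pow, ← C_pow]
  rw [Finset.prod_mul_distrib, ← map_prod]
  rw [algebraMap_eq, ← mul_assoc, ← map_mul]

lemma coeff_aeval_scale (u : Fin m → ℂ) (g : MvPolynomial (Fin m) ℂ) (d : Fin m →₀ ℕ) :
    coeff d (aeval (fun i => C (u i) * X i) g) = (∏ i ∈ d.support, u i ^ d i) * coeff d g := by
  conv_lhs => rw [g.as_sum]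
  rw [map_sum, Finset.sum_congr rfl (fun t _ => aeval_scale_monomial u t (coeff t g))]
  rw [coeff_sum]
  simp_rw [coeff_monomial]
  rw [Finset.sum_ite_eq' g.support d (fun t => coeff t g * ∏ i ∈ t.support, u i ^ t i)]
  by_cases h : d ∈ g.support
  · rw [if_pos h, mul_comm]
  · rw [if_neg h, notMem_support_iff.mp h, mul_zero]

/-- Invariance under a single sign flip forces even exponents. -/
lemma even_of_flip_invariant (g : MvPolynomial (Fin m) ℂ)
    (hg : ∀ i : Fin m, aeval (signedSub (1, fun j => if j = i then (-1 : ℂ) else 1)) g = g)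
    {d : Fin m →₀ ℕ} (hd : coeff d g ≠ 0) (i : Fin m) : Even (d i) := by
  rw [← Nat.not_odd_iff_even]
  intro hodd
  have hmem : i ∈ d.support := by
    rw [Finsupp.mem_support_iff]
    intro h0
    rw [h0] at hodd
    exact (Nat.not_even_iff_odd.mpr hodd) Even.zero
  have h1 : aeval (fun j => C (if j = i then (-1 : ℂ) else 1) * X j) g = g := by
    have := hg i
    have he : signedSub (1, fun j => if j = i then (-1 : ℂ) else 1) =
        fun j => C (if j = i then (-1 : ℂ) else 1) * X j := by
      funext j; simp [signedSub]
    rwa [he] at this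
  have h2 := congrArg (coeff d) h1
  rw [coeff_aeval_scale] at h2
  have h3 : (∏ j ∈ d.support, (if j = i then (-1 : ℂ) else 1) ^ d j) = -1 := by
    rw [Finset.prod_eq_single_of_mem i hmem]
    · rw [if_pos rfl, Odd.neg_one_pow hodd]
    · intro j _ hji
      rw [if_neg hji, one_pow]
  rw [h3] at h2
  apply hd
  have : coeff d g + coeff d g = 0 := by linear_combination -h2
  exact add_self_eq_zero.mp this

lemma mem_range_expand_two (g : MvPolynomial (Fin m) ℂ)
    (hev : ∀ d : Fin m →₀ ℕ, coeff d g ≠ 0 → ∀ i, Even (d i)) :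
    g ∈ (expand 2 : MvPolynomial (Fin m) ℂ →ₐ[ℂ] MvPolynomial (Fin m) ℂ).range := by
  rw [g.as_sum]
  apply Subalgebra.sum_mem
  intro t ht
  have htev := hev t (mem_support_iff.mp ht)
  set e : Fin m →₀ ℕ := Finsupp.mapRange (· / 2) (by norm_num) t with he
  have hsupp : e.support = t.support := by
    ext j
    simp only [he, Finsupp.mem_support_iff, Finsupp.mapRange_apply]
    constructor
    · intro h h0; exact h (by rw [h0]; rfl)
    · intro h h0
      obtain ⟨c, hc⟩ := htev j
      omega
  refine ⟨monomial e (coeff t g), ?_⟩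
  show expand 2 (monomial e (coeff t g)) = _
  have h2e : 2 • e = t := by
    ext j
    simp only [he, Finsupp.smul_apply, Finsupp.mapRange_apply, smul_eq_mul]
    obtain ⟨c, hc⟩ := htev j
    omega
  rw [expand_monomial, h2e]

lemma expand_two_injective :
    Function.Injective (expand 2 : MvPolynomial (Fin m) ℂ →ₐ[ℂ] MvPolynomial (Fin m) ℂ) := by
  have key : ∀ (h : MvPolynomial (Fin m) ℂ) (d : Fin m →₀ ℕ),
      coeff (2 • d) (expand 2 h) = coeff d h := by
    intro h d
    conv_lhs => rw [h.as_sum]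
    rw [map_sum]
    have hmon : ∀ t : Fin m →₀ ℕ, ∀ a : ℂ,
        expand 2 (monomial t a) = monomial (2 • t) a := by
      intro t a
      rw [expand_monomial]
    rw [Finset.sum_congr rfl (fun t _ => hmon t (coeff t h))]
    rw [coeff_sum]
    simp_rw [coeff_monomial]
    have hinj : ∀ t : Fin m →₀ ℕ, 2 • t = 2 • d → t = d := by
      intro t htd
      ext j
      have := congrArg (fun s => s j) htd
      simp only [Finsupp.smul_apply, smul_eq_mul] at this
      omega
    by_cases hd : d ∈ h.support
    · rw [Finset.sum_eq_single_of_mem d hd]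
      · rw [if_pos rfl]
      · intro t _ htd
        rw [if_neg (fun hh => htd (hinj t hh))]
    · rw [Finset.sum_eq_zero, notMem_support_iff.mp hd]
      intro t htmem
      rw [if_neg (fun hh => hd (hinj t hh ▸ htmem))]
  intro h1 h2 h12
  ext d
  rw [← key h1 d, ← key h2 d, h12]

/-- Fundamental structure: polynomials invariant under all signed permutations lie in the
algebra generated by the elementary symmetric polynomials of the squares. -/
lemma fullinv_mem_adjoin (g : MvPolynomial (Fin m) ℂ)
    (hg : g ∈ signedInvariants {p : Equiv.Perm (Fin m) × (Fin m → ℂ) |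
      ∀ i, p.2 i = 1 ∨ p.2 i = -1}) :
    g ∈ Algebra.adjoin ℂ (Set.range fun i : Fin m => Alpha m (i + 1)) := by
  -- g is even in every variable
  have heven : ∀ d : Fin m →₀ ℕ, coeff d g ≠ 0 → ∀ i, Even (d i) := by
    apply even_of_flip_invariant
    intro i
    apply hg
    intro j
    dsimp only
    by_cases hji : j = i
    · rw [if_pos hji]; right; rfl
    · rw [if_neg hji]; left; rfl
  have hr := mem_range_expand_two g heven
  rw [AlgHom.mem_range] at hr
  obtain ⟨h, rfl⟩ := hr
  -- h is symmetric
  have hsym : h.IsSymmetric := by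
    intro e
    apply expand_two_injective
    rw [← rename_expand]
    have hfun : (fun i => (X (e i) : MvPolynomial (Fin m) ℂ)) = signedSub (e, fun _ => (1:ℂ)) := by
      funext i; simp [signedSub]
    have hre : rename (⇑e) (expand 2 h) = aeval (signedSub (e, fun _ => (1:ℂ))) (expand 2 h) := by
      rw [← hfun, rename_eq_aeval]; rfl
    rw [hre, hg (e, fun _ => (1:ℂ)) (fun i => Or.inl rfl)]
  -- apply the fundamental theorem of symmetric polynomials
  have hFT : h ∈ Algebra.adjoin ℂ (Set.range fun i : Fin m => esymm (Fin m) ℂ (i + 1)) := by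
    obtain ⟨q, hq⟩ := esymmAlgHom_fin_surjective (R := ℂ) (le_refl m) ⟨h, hsym⟩
    have : h = aeval (fun i : Fin m => esymm (Fin m) ℂ (i + 1)) q := by
      have := congrArg Subtype.val hq
      rw [esymmAlgHom_apply] at this
      exact this.symm
    rw [this, Algebra.adjoin_range_eq_range_aeval]
    exact ⟨q, rfl⟩
  have hmap : expand 2 h ∈ (Algebra.adjoin ℂ
      (Set.range fun i : Fin m => esymm (Fin m) ℂ (i + 1))).map
      (expand 2 : MvPolynomial (Fin m) ℂ →ₐ[ℂ] MvPolynomial (Fin m) ℂ) :=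
    Subalgebra.mem_map.mpr ⟨h, hFT, rfl⟩
  rw [AlgHom.map_adjoin, ← Set.range_comp] at hmap
  simpa [Alpha, Function.comp_def] using hmap

section Main
variable {n : ℕ}

local notation "S" => MvPolynomial (Fin (n+1)) ℂ

lemma signedSub_fix {p : Equiv.Perm (Fin (n+1)) × (Fin (n+1) → ℂ)}
    (h : signedSub p 0 = X 0) : p.1 0 = 0 ∧ p.2 0 = 1 := by
  have h' : C (p.2 0) * X (p.1 0) = (X 0 : S) := h
  by_cases h0 : p.1 0 = 0
  · refine ⟨h0, ?_⟩
    rw [h0] at h'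
    have h1 := congrArg (coeff (Finsupp.single (0 : Fin (n+1)) 1)) h'
    rw [coeff_C_mul, coeff_X' (0 : Fin (n+1)), if_pos rfl] at h1
    simpa using h1
  · exfalso
    have h1 := congrArg (coeff (Finsupp.single (p.1 0) 1)) h'
    rw [coeff_C_mul, coeff_X' (p.1 0), if_pos rfl, coeff_X' (0 : Fin (n+1))] at h1
    rw [if_neg (fun hh => h0 (by
      have := (Finsupp.single_left_inj (one_ne_zero)).mp hh
      exact this.symm))] at h1
    rw [mul_one] at h1
    rw [h1] at h'
    simp only [map_zero, zero_mul] at h'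
    exact X_ne_zero _ h'.symm

/-- Lift a signed permutation of `Fin n` to one of `Fin (n+1)` fixing `0`. -/
noncomputable def liftSP (q : Equiv.Perm (Fin n) × (Fin n → ℂ)) :
    Equiv.Perm (Fin (n+1)) × (Fin (n+1) → ℂ) :=
  (Equiv.Perm.decomposeFin.symm (0, q.1), Fin.cases 1 q.2)

lemma liftSP_one : (liftSP q).1 0 = 0 := Equiv.Perm.decomposeFin_symm_apply_zero 0 q.1

lemma liftSP_succ (j : Fin n) : (liftSP q).1 j.succ = (q.1 j).succ := by
  rw [liftSP, Equiv.Perm.decomposeFin_symm_apply_succ, Equiv.swap_self, Equiv.refl_apply]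

lemma liftSP_sgn_zero : (liftSP q).2 0 = 1 := by simp [liftSP]

lemma liftSP_sgn_succ (j : Fin n) : (liftSP q).2 j.succ = q.2 j := by simp [liftSP]

lemma liftSP_mem (q : Equiv.Perm (Fin n) × (Fin n → ℂ)) (hq : ∀ i, q.2 i = 1 ∨ q.2 i = -1) :
    liftSP q ∈ {p : Equiv.Perm (Fin (n + 1)) × (Fin (n + 1) → ℂ) |
      (∀ i, p.2 i = 1 ∨ p.2 i = -1) ∧ signedSub p 0 = X 0} := by
  constructor
  · intro i
    refine Fin.cases ?_ ?_ i
    · left; rfl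
    · intro j
      exact hq j
  · simp [signedSub, liftSP]

lemma fse_comm (q : Equiv.Perm (Fin n) × (Fin n → ℂ)) (f : S) :
    finSuccEquiv ℂ n (aeval (signedSub (liftSP q)) f) =
      Polynomial.map ((aeval (signedSub q)).toRingHom) (finSuccEquiv ℂ n f) := by
  induction f using MvPolynomial.induction_on with
  | C a =>
    rw [aeval_C]
    have h1 : finSuccEquiv ℂ n (C a) = Polynomial.C (C a) := by
      simp [finSuccEquiv_apply]
    rw [show (algebraMap ℂ S) a = C a from rfl, h1, Polynomial.map_C]
    simp
  | add f g hf hg => rw [map_add, map_add, hf, hg, map_add, Polynomial.map_add]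
  | mul_X f i hf =>
    rw [map_mul, map_mul, hf, map_mul, Polynomial.map_mul]
    refine congrArg₂ (· * ·) rfl ?_
    refine Fin.cases ?_ ?_ i
    · rw [aeval_X]
      simp [signedSub, liftSP, finSuccEquiv_X_zero]
    · intro j
      rw [aeval_X]
      have h1 : finSuccEquiv ℂ n (C (q.2 j) : S) = Polynomial.C (C (q.2 j)) := by
        simp [finSuccEquiv_apply]
      have h2 : (aeval (signedSub q)).toRingHom (X j : MvPolynomial (Fin n) ℂ)
          = C (q.2 j) * X (q.1 j) := by
        show aeval (signedSub q) (X j) = _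
        rw [aeval_X]; rfl
      simp [signedSub, liftSP, finSuccEquiv_X_succ, h1, h2,
        Equiv.Perm.decomposeFin_symm_apply_succ, Polynomial.map_C]

lemma fse_rename_succ (g : MvPolynomial (Fin n) ℂ) :
    finSuccEquiv ℂ n (rename Fin.succ g) = Polynomial.C g := by
  induction g using MvPolynomial.induction_on with
  | C a =>
    rw [rename_C]
    simp [finSuccEquiv_apply]
  | add f g hf hg => rw [map_add, map_add, hf, hg, map_add]
  | mul_X f i hf => rw [map_mul, map_mul, hf, rename_X, finSuccEquiv_X_succ, Polynomial.C_mul]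

/-- `βₖ`: elementary symmetric polynomials in the squares of `x₁, …, xₙ`. -/
noncomputable def Beta (n k : ℕ) : MvPolynomial (Fin (n+1)) ℂ :=
  rename Fin.succ (Alpha n k)

lemma w0_decomp (f : S)
    (hf : f ∈ signedInvariants {p : Equiv.Perm (Fin (n + 1)) × (Fin (n + 1) → ℂ) |
      (∀ i, p.2 i = 1 ∨ p.2 i = -1) ∧ signedSub p 0 = X 0}) :
    ∃ (N : ℕ) (g : ℕ → MvPolynomial (Fin n) ℂ),
      (∀ k, g k ∈ Algebra.adjoin ℂ (Set.range fun i : Fin n => Alpha n (i+1))) ∧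
      f = ∑ k ∈ Finset.range N, rename Fin.succ (g k) * X 0 ^ k := by
  set F := finSuccEquiv ℂ n f with hF
  have hcoeff : ∀ k, F.coeff k ∈ signedInvariants {q : Equiv.Perm (Fin n) × (Fin n → ℂ) |
      ∀ i, q.2 i = 1 ∨ q.2 i = -1} := by
    intro k q hq
    have h1 := fse_comm q f
    rw [hf (liftSP q) (liftSP_mem q hq)] at h1
    have h2 := congrArg (fun P => Polynomial.coeff P k) h1.symm
    simpa [Polynomial.coeff_map] using h2
  refine ⟨F.natDegree + 1, fun k => F.coeff k, fun k => fullinv_mem_adjoin _ (hcoeff k), ?_⟩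
  apply (finSuccEquiv ℂ n).injective
  rw [map_sum]
  have h3 : ∀ k, finSuccEquiv ℂ n (rename Fin.succ (F.coeff k) * X 0 ^ k)
      = Polynomial.C (F.coeff k) * Polynomial.X ^ k := by
    intro k
    rw [map_mul, fse_rename_succ, map_pow, finSuccEquiv_X_zero]
  rw [Finset.sum_congr rfl fun k _ => h3 k]
  simp_rw [Polynomial.C_mul_X_pow_eq_monomial]
  exact (F.as_sum_range' _ (Nat.lt_succ_self _))

/-- The auxiliary polynomial `∏ (T + xᵢ²)`. -/
noncomputable def PP (n : ℕ) : Polynomial (MvPolynomial (Fin (n+1)) ℂ) :=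
  ∏ i : Fin (n+1), (Polynomial.X + Polynomial.C ((X i) ^ 2))

noncomputable def PP' (n : ℕ) : Polynomial (MvPolynomial (Fin (n+1)) ℂ) :=
  ∏ i : Fin n, (Polynomial.X + Polynomial.C ((X i.succ) ^ 2))

lemma Alpha_eq_sum {m k : ℕ} :
    Alpha m k = ∑ t ∈ Finset.powersetCard k Finset.univ, ∏ i ∈ t, (X i : MvPolynomial (Fin m) ℂ)^2 := by
  rw [Alpha, esymm, map_sum]
  refine Finset.sum_congr rfl fun t _ => ?_
  rw [map_prod]
  exact Finset.prod_congr rfl fun i _ => expand_X 2 i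

lemma Beta_eq_sum {k : ℕ} :
    Beta n k = ∑ t ∈ Finset.powersetCard k (Finset.univ : Finset (Fin n)),
      ∏ i ∈ t, (X i.succ : S)^2 := by
  rw [Beta, Alpha_eq_sum, map_sum]
  refine Finset.sum_congr rfl fun t _ => ?_
  rw [map_prod]
  refine Finset.prod_congr rfl fun i _ => ?_
  rw [map_pow, rename_X]

lemma esymm_high {m k : ℕ} (h : m < k) : esymm (Fin m) ℂ k = 0 := by
  rw [esymm, Finset.powersetCard_eq_empty.mpr (by simpa using h), Finset.sum_empty]

lemma Alpha_high {m k : ℕ} (h : m < k) : Alpha m k = 0 := by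
  rw [Alpha, esymm_high h, map_zero]

lemma Beta_high {k : ℕ} (h : n < k) : Beta n k = 0 := by
  rw [Beta, Alpha_high h, map_zero]

lemma Alpha_zero {m : ℕ} : Alpha m 0 = 1 := by rw [Alpha, esymm_zero, map_one]

lemma PP_coeff {k : ℕ} (hk : k ≤ n+1) : (PP n).coeff k = Alpha (n+1) (n+1-k) := by
  rw [PP, Finset.prod_X_add_C_coeff _ _ (by simpa using hk), Alpha_eq_sum]
  congr 2
  rw [Finset.card_univ, Fintype.card_fin]

lemma PP'_coeff {k : ℕ} (hk : k ≤ n) : (PP' n).coeff k = Beta n (n-k) := by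
  rw [PP', Finset.prod_X_add_C_coeff _ _ (by simpa using hk), Beta_eq_sum]
  congr 2
  rw [Finset.card_univ, Fintype.card_fin]

lemma PP_eq : PP n = (Polynomial.X + Polynomial.C ((X 0 : S)^2)) * PP' n := by
  rw [PP, PP', Fin.prod_univ_succ]

lemma beta_id (j : ℕ) : Beta n (j+1) = Alpha (n+1) (j+1) - X 0^2 * Beta n j := by
  rcases lt_trichotomy j n with hj | hjeq | hj
  · have h1 : (PP n).coeff (n-j) = Alpha (n+1) (j+1) := by
      rw [PP_coeff (by omega)]
      congr 1
      omega
    have h2 : (PP n).coeff (n-j) = Beta n (j+1) + X 0^2 * Beta n j := by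
      rw [PP_eq, add_mul, Polynomial.coeff_add,
        show n - j = (n-j-1)+1 by omega, Polynomial.coeff_X_mul,
        Polynomial.coeff_C_mul, PP'_coeff (by omega), PP'_coeff (by omega),
        show n-(n-j-1) = j+1 by omega, show n-((n-j-1)+1) = j by omega]
    rw [← h1, h2]
    ring
  · rw [hjeq]
    have h1 : (PP n).coeff 0 = Alpha (n+1) (n+1) := by
      rw [PP_coeff (by omega), Nat.sub_zero]
    have h2 : (PP n).coeff 0 = X 0^2 * Beta n n := by
      rw [PP_eq, Polynomial.mul_coeff_zero, Polynomial.coeff_add, Polynomial.coeff_X_zero,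
        Polynomial.coeff_C_zero, zero_add, PP'_coeff (by omega), Nat.sub_zero]
    rw [Beta_high (by omega), ← h1, h2]
    ring
  · rw [Beta_high (by omega), Beta_high (by omega), Alpha_high (by omega)]
    ring

lemma PP_natDegree : (PP n).natDegree ≤ n + 1 := by
  refine le_trans (Polynomial.natDegree_prod_le _ _) ?_
  have : ∀ i : Fin (n+1), (Polynomial.X + Polynomial.C ((X i : S)^2)).natDegree = 1 := fun i =>
    Polynomial.natDegree_X_add_C _
  rw [Finset.sum_congr rfl fun i _ => this i]
  simp

lemma PP_eval_zero : (PP n).eval (-((X 0 : S)^2)) = 0 := by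
  rw [PP, Polynomial.eval_prod]
  apply Finset.prod_eq_zero (Finset.mem_univ (0 : Fin (n+1)))
  simp

lemma X0_pow_rel :
    (X 0 : S) ^ (2 * (n+1)) =
      ∑ k ∈ Finset.range (n+1), ((-1 : S) ^ (n + k) * Alpha (n+1) (n+1-k)) * X 0 ^ (2*k) := by
  have h0 : ∑ k ∈ Finset.range (n+2), Alpha (n+1) (n+1-k) * (-((X 0:S)^2))^k = 0 := by
    have hd : (PP n).natDegree < n + 2 := lt_of_le_of_lt PP_natDegree (by omega)
    have he := Polynomial.eval_eq_sum_range' hd (-((X 0:S)^2))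
    rw [PP_eval_zero] at he
    refine Eq.trans (Finset.sum_congr rfl fun k hk => ?_) he.symm
    rw [PP_coeff (by have := Finset.mem_range.mp hk; omega)]
  rw [Finset.sum_range_succ, Nat.sub_self, Alpha_zero] at h0
  have hA : ∑ k ∈ Finset.range (n+1), Alpha (n+1) (n+1-k) * (-((X 0:S)^2))^k
      = -((-((X 0:S)^2))^(n+1)) := by linear_combination h0
  have hterm : ∀ k, ((-1:S)^(n+k) * Alpha (n+1) (n+1-k)) * X 0^(2*k)
      = ((-1:S)^n) * (Alpha (n+1) (n+1-k) * (-((X 0:S)^2))^k) := by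
    intro k
    rw [neg_pow, pow_add, pow_mul]
    ring
  rw [Finset.sum_congr rfl fun k _ => hterm k, ← Finset.mul_sum, hA]
  have hx : (-((X 0:S)^2))^(n+1) = (-1:S)^(n+1) * (X 0:S)^(2*(n+1)) := by
    rw [neg_pow ((X 0:S)^2), ← pow_mul]
  rw [hx]
  have hm : (-1:S)^n * (-1:S)^(n+1) = -1 := by
    rw [← pow_add]
    exact Odd.neg_one_pow ⟨n, by ring⟩
  linear_combination ((X 0:S)^(2*(n+1))) * hm

noncomputable def SWa (n : ℕ) : Subalgebra ℂ (MvPolynomial (Fin (n+1)) ℂ) :=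
  signedInvariants {p : Equiv.Perm (Fin (n + 1)) × (Fin (n + 1) → ℂ) |
    ∀ i, p.2 i = 1 ∨ p.2 i = -1}

noncomputable def MMa (n : ℕ) : Submodule ↥(SWa n) (MvPolynomial (Fin (n+1)) ℂ) :=
  Submodule.span ↥(SWa n) (Set.range fun j : Fin (2*(n+1)) => (X 0)^(j:ℕ))

lemma sw_smul (a : ↥(SWa n)) (s : MvPolynomial (Fin (n+1)) ℂ) : a • s = ↑a * s := rfl

lemma X0_pow_mem : ∀ m : ℕ, (X 0 : S)^m ∈ MMa n := by
  intro m
  induction m using Nat.strong_induction_on with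
  | _ m ih =>
    by_cases hm : m < 2*(n+1)
    · exact Submodule.subset_span ⟨⟨m, hm⟩, rfl⟩
    · push_neg at hm
      have hsplit : (X 0 : S)^m = X 0^(m - 2*(n+1)) * X 0^(2*(n+1)) := by
        rw [← pow_add]
        congr 1
        omega
      rw [hsplit, X0_pow_rel, Finset.mul_sum]
      apply Submodule.sum_mem
      intro k hk
      have hkn : k < n + 1 := Finset.mem_range.mp hk
      have heq : (X 0:S)^(m-2*(n+1)) * (((-1:S)^(n+k) * Alpha (n+1) (n+1-k)) * X 0^(2*k))
          = ((-1:S)^(n+k) * Alpha (n+1) (n+1-k)) * X 0^(m - 2*(n+1) + 2*k) := by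
        rw [pow_add]
        ring
      rw [heq]
      have hcoef : (-1:S)^(n+k) * Alpha (n+1) (n+1-k) ∈ SWa n := by
        apply Subalgebra.mul_mem
        · apply Subalgebra.pow_mem
          apply Subalgebra.neg_mem
          exact Subalgebra.one_mem _
        · exact alpha_mem _
      exact Submodule.smul_mem _ (⟨_, hcoef⟩ : ↥(SWa n)) (ih (m - 2*(n+1) + 2*k) (by omega))

lemma MM_pow_mul {y : MvPolynomial (Fin (n+1)) ℂ} (a : ℕ) (hy : y ∈ MMa n) :
    (X 0 : S)^a * y ∈ MMa n := by
  induction hy using Submodule.span_induction with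
  | mem x hx =>
    obtain ⟨j, rfl⟩ := hx
    rw [← pow_add]
    exact X0_pow_mem _
  | zero => rw [mul_zero]; exact Submodule.zero_mem _
  | add x y hx hy hx' hy' => rw [mul_add]; exact Submodule.add_mem _ hx' hy'
  | smul c x hx hx' => rw [mul_smul_comm]; exact Submodule.smul_mem _ _ hx'

lemma MM_mul {x y : MvPolynomial (Fin (n+1)) ℂ} (hx : x ∈ MMa n) (hy : y ∈ MMa n) :
    x * y ∈ MMa n := by
  induction hx using Submodule.span_induction with
  | mem x hx =>
    obtain ⟨j, rfl⟩ := hx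
    exact MM_pow_mul _ hy
  | zero => rw [zero_mul]; exact Submodule.zero_mem _
  | add x z hx hz hx' hz' => rw [add_mul]; exact Submodule.add_mem _ hx' hz'
  | smul c x hx hx' => rw [smul_mul_assoc]; exact Submodule.smul_mem _ _ hx'

lemma one_mem_MM : (1 : S) ∈ MMa n := by
  have := X0_pow_mem (n := n) 0
  rwa [pow_zero] at this

lemma sw_mem_MM {x : MvPolynomial (Fin (n+1)) ℂ} (hx : x ∈ SWa n) : x ∈ MMa n := by
  have := Submodule.smul_mem (MMa n) (⟨x, hx⟩ : ↥(SWa n)) one_mem_MM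
  rwa [sw_smul, mul_one] at this

/-- `MMa n` as a subalgebra over `ℂ`. -/
noncomputable def Msub (n : ℕ) : Subalgebra ℂ (MvPolynomial (Fin (n+1)) ℂ) where
  carrier := MMa n
  mul_mem' := MM_mul
  add_mem' := Submodule.add_mem _
  algebraMap_mem' := fun c => sw_mem_MM (Subalgebra.algebraMap_mem _ c)

lemma mem_Msub {x : MvPolynomial (Fin (n+1)) ℂ} : x ∈ Msub n ↔ x ∈ MMa n := Iff.rfl

lemma beta_mem_MM (j : ℕ) : Beta n j ∈ MMa n := by
  induction j with
  | zero =>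
    rw [show Beta n 0 = 1 by rw [Beta, Alpha_zero, map_one]]
    exact one_mem_MM
  | succ j ih =>
    rw [beta_id j]
    apply Submodule.sub_mem
    · exact sw_mem_MM (alpha_mem _)
    · exact MM_mul (X0_pow_mem 2) ih

lemma w0_mem_MM (f : MvPolynomial (Fin (n+1)) ℂ)
    (hf : f ∈ signedInvariants {p : Equiv.Perm (Fin (n + 1)) × (Fin (n + 1) → ℂ) |
      (∀ i, p.2 i = 1 ∨ p.2 i = -1) ∧ signedSub p 0 = X 0}) : f ∈ MMa n := by
  obtain ⟨N, g, hg, rfl⟩ := w0_decomp f hf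
  apply Submodule.sum_mem
  intro k _
  apply MM_mul _ (X0_pow_mem k)
  have h1 : rename Fin.succ (g k) ∈ Algebra.adjoin ℂ
      (Set.range fun i : Fin n => Beta n (i+1)) := by
    have h2 : rename Fin.succ (g k) ∈ (Algebra.adjoin ℂ
        (Set.range fun i : Fin n => Alpha n (i+1))).map
        (rename Fin.succ : MvPolynomial (Fin n) ℂ →ₐ[ℂ] S) :=
      Subalgebra.mem_map.mpr ⟨g k, hg k, rfl⟩
    rw [AlgHom.map_adjoin, ← Set.range_comp] at h2
    simpa [Beta, Function.comp_def] using h2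
  have hle : Algebra.adjoin ℂ (Set.range fun i : Fin n => Beta n (i+1)) ≤ Msub n := by
    rw [Algebra.adjoin_le_iff]
    rintro x ⟨i, rfl⟩
    exact beta_mem_MM _
  exact hle h1

lemma uniq_coeffs (d : Fin (2*(n+1)) → MvPolynomial (Fin (n+1)) ℂ)
    (hd : ∀ j, d j ∈ SWa n)
    (hsum : ∑ j : Fin (2*(n+1)), d j * X 0^(j:ℕ) = 0) : ∀ j, d j = 0 := by
  classical
  set Q : Polynomial S :=
    ∑ j : Fin (2*(n+1)), Polynomial.C (d j) * Polynomial.X ^ (j:ℕ) with hQ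
  have hroot : ∀ z : Fin (n+1) × Bool,
      Q.eval ((if z.2 then (1:S) else -1) * X z.1) = 0 := by
    intro ⟨i, b⟩
    set ε : ℂ := if b then 1 else -1 with hε
    have hεmem : ∀ i', (fun _ : Fin (n+1) => ε) i' = 1 ∨ (fun _ : Fin (n+1) => ε) i' = -1 := by
      intro i'
      by_cases hb : b <;> simp [hε, hb]
    set p : Equiv.Perm (Fin (n+1)) × (Fin (n+1) → ℂ) := (Equiv.swap 0 i, fun _ => ε) with hp
    have h1 := congrArg (aeval (signedSub p)) hsum
    rw [map_sum, map_zero] at h1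
    have h2 : ∀ j : Fin (2*(n+1)), aeval (signedSub p) (d j * X 0^(j:ℕ))
        = d j * (C ε * X i)^(j:ℕ) := by
      intro j
      have hsub : signedSub p 0 = C ε * X i := by
        show C ((fun _ : Fin (n+1) => ε) 0) * X (Equiv.swap 0 i 0) = C ε * X i
        rw [Equiv.swap_apply_left]
      rw [map_mul, map_pow, aeval_X, hsub, hd j p hεmem]
    rw [Finset.sum_congr rfl fun j _ => h2 j] at h1
    have h3 : Q.eval (C ε * X i) = 0 := by
      rw [hQ, Polynomial.eval_finset_sum]
      simpa using h1
    have h4 : (C ε * X i : S) = (if b then (1:S) else -1) * X i := by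
      by_cases hb : b <;> simp [hε, hb]
    rwa [h4] at h3
  have hinj : Function.Injective
      (fun z : Fin (n+1) × Bool => (if z.2 then (1:S) else -1) * X z.1) := by
    rintro ⟨i, b⟩ ⟨i', b'⟩ hzz
    simp only at hzz
    have hii : i' = i := by
      by_contra hne
      have h1 := congrArg (coeff (Finsupp.single i 1)) hzz
      have hL : coeff (Finsupp.single i 1) ((if b then (1:S) else -1) * X i) ≠ 0 := by
        by_cases hb : b <;> simp [hb, coeff_X']
      have hR : coeff (Finsupp.single i 1) ((if b' then (1:S) else -1) * X i') = 0 := by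
        have hx : coeff (Finsupp.single i 1) (X i' : S) = 0 := by
          rw [coeff_X', if_neg]
          intro hcon
          exact hne ((Finsupp.single_left_inj one_ne_zero).mp hcon)
        by_cases hb : b' <;> simp [hb, hx]
      exact hL (h1.trans hR)
    subst hii
    have hcc : (if b then (1:S) else -1) = (if b' then (1:S) else -1) :=
      mul_right_cancel₀ (X_ne_zero _) hzz
    have hone : (1:S) ≠ -1 := by
      intro h
      have h' := congrArg (coeff 0) h
      simp at h'
      norm_num at h'
    cases b <;> cases b' <;> simp only [if_true, if_false] at hcc
    · rfl
    · exact absurd hcc.symm hone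
    · exact absurd hcc hone
    · rfl
  have hdeg : Q.natDegree < Fintype.card (Fin (n+1) × Bool) := by
    have h1 : Q.natDegree ≤ 2*n+1 := by
      apply Polynomial.natDegree_sum_le_of_forall_le
      intro j _
      refine le_trans (Polynomial.natDegree_C_mul_le _ _) ?_
      rw [Polynomial.natDegree_X_pow]
      omega
    simp only [Fintype.card_prod, Fintype.card_fin, Fintype.card_bool]
    omega
  have hQ0 : Q = 0 := Polynomial.eq_zero_of_natDegree_lt_card_of_eval_eq_zero Q hinj hroot hdeg
  intro j
  have hcj : Q.coeff (j:ℕ) = d j := by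
    rw [hQ, Polynomial.finset_sum_coeff]
    rw [Finset.sum_eq_single j]
    · rw [Polynomial.coeff_C_mul, Polynomial.coeff_X_pow, if_pos rfl, mul_one]
    · intro j' _ hj'
      rw [Polynomial.coeff_C_mul, Polynomial.coeff_X_pow,
        if_neg (fun h => hj' (Fin.ext h.symm)), mul_zero]
    · intro hj
      exact absurd (Finset.mem_univ j) hj
  rw [← hcj, hQ0, Polynomial.coeff_zero]

end Main

/-- Let `S = ℂ[x₁,…,xₙ]` (here with `n+1` variables), `W` the hyperoctahedral group of
signed permutations of the variables (the Weyl group of type `Cₙ`), and `W₀` the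
stabilizer of the weight `−x₁`.  Then `S^{W₀} = S^W[x₁]`, and `S^{W₀}` is a free
`S^W`-module with basis `1, x₁, …, x₁^{2n−1}`. -/
theorem stmt_11 (n : ℕ) :
    (signedInvariants {p : Equiv.Perm (Fin (n + 1)) × (Fin (n + 1) → ℂ) |
        (∀ i, p.2 i = 1 ∨ p.2 i = -1) ∧ signedSub p 0 = X 0} =
      signedInvariants {p : Equiv.Perm (Fin (n + 1)) × (Fin (n + 1) → ℂ) |
        ∀ i, p.2 i = 1 ∨ p.2 i = -1} ⊔ Algebra.adjoin ℂ {X 0}) ∧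
    ∀ f ∈ signedInvariants {p : Equiv.Perm (Fin (n + 1)) × (Fin (n + 1) → ℂ) |
        (∀ i, p.2 i = 1 ∨ p.2 i = -1) ∧ signedSub p 0 = X 0},
      ∃! c : Fin (2 * (n + 1)) →
          ↥(signedInvariants {p : Equiv.Perm (Fin (n + 1)) × (Fin (n + 1) → ℂ) |
              ∀ i, p.2 i = 1 ∨ p.2 i = -1}),
        f = ∑ j : Fin (2 * (n + 1)),
          (c j : MvPolynomial (Fin (n + 1)) ℂ) * X 0 ^ (j : ℕ) := by
  have main : ∀ f ∈ signedInvariants {p : Equiv.Perm (Fin (n + 1)) × (Fin (n + 1) → ℂ) |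
      (∀ i, p.2 i = 1 ∨ p.2 i = -1) ∧ signedSub p 0 = X 0},
      ∃ c : Fin (2 * (n + 1)) → ↥(SWa n),
        f = ∑ j : Fin (2 * (n + 1)), (c j : MvPolynomial (Fin (n + 1)) ℂ) * X 0 ^ (j : ℕ) := by
    intro f hf
    have hfM : f ∈ MMa n := w0_mem_MM f hf
    obtain ⟨c, hc⟩ := (Submodule.mem_span_range_iff_exists_fun ↥(SWa n)).mp hfM
    exact ⟨c, hc.symm⟩
  constructor
  · apply le_antisymm
    · intro f hf
      obtain ⟨c, hc⟩ := main f hf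
      rw [hc]
      apply Subalgebra.sum_mem
      intro j _
      apply Subalgebra.mul_mem
      · exact (le_sup_left : signedInvariants _ ≤ _) (c j).2
      · apply Subalgebra.pow_mem
        exact (le_sup_right : Algebra.adjoin ℂ {(X 0 : MvPolynomial (Fin (n+1)) ℂ)} ≤ _)
          (Algebra.subset_adjoin (Set.mem_singleton _))
    · apply sup_le
      · intro f hf p hp
        exact hf p hp.1
      · rw [Algebra.adjoin_le_iff]
        rintro x hx
        rw [Set.mem_singleton_iff] at hx
        subst hx
        intro p hp
        rw [aeval_X]
        exact hp.2
  · intro f hf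
    obtain ⟨c, hc⟩ := main f hf
    refine ⟨c, hc, ?_⟩
    intro c' hc'
    have hdiff : ∑ j : Fin (2*(n+1)),
        ((c' j : MvPolynomial (Fin (n+1)) ℂ) - (c j : MvPolynomial (Fin (n+1)) ℂ))
          * X 0^(j:ℕ) = 0 := by
      have h1 : ∑ j : Fin (2*(n+1)), (c' j : MvPolynomial (Fin (n+1)) ℂ) * X 0^(j:ℕ) = f :=
        hc'.symm
      have h2 : ∑ j : Fin (2*(n+1)), (c j : MvPolynomial (Fin (n+1)) ℂ) * X 0^(j:ℕ) = f :=
        hc.symm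
      simp only [sub_mul]
      rw [Finset.sum_sub_distrib, h1, h2, sub_self]
    have hz := uniq_coeffs (fun j => (c' j : MvPolynomial (Fin (n+1)) ℂ) - (c j))
      (fun j => Subalgebra.sub_mem _ (c' j).2 (c j).2) hdiff
    funext j
    have := hz j
    have : (c' j : MvPolynomial (Fin (n+1)) ℂ) = c j := by
      have h := sub_eq_zero.mp this
      exact h
    exact Subtype.ext this
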